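/- Let A be a normal idempotent n×n real matrix (n ≥ 2) and F defined relative to columns 1 and 2, i.e., f_{kl} = a_{k1} + a_{l2} - a_{k2} - a_{l1}. Then f_{12} = max over 1 ≤ k < l ≤ n of |f_{kl}|. -/
import Mathlib


/-- For a normal idempotent matrix `A` (order `n ≥ 2`) and `F` relative to
columns 1 and 2, `f_{12}` equals the maximum of `|f_{kl}|` over all pairs `k < l`. -/
theorem stmt4 (n : ℕ) (A : Matrix (Fin (n+2)) (Fin (n+2)) ℝ)
    (hdiag : ∀ i, A i i = 0) (hneg : ∀ i j, A i j ≤ 0)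
    (hsub : ∀ i j k, A i k + A k j ≤ A i j) :
    A 0 0 + A 1 1 - A 0 1 - A 1 0 =
      (Finset.univ.filter (fun p : Fin (n+2) × Fin (n+2) => p.1 < p.2)).sup'
        ⟨(0, 1), by simpa using Fin.zero_lt_one⟩
        (fun p => |A p.1 0 + A p.2 1 - A p.1 1 - A p.2 0|) := by
  have h00 := hdiag 0
  have h11 := hdiag 1
  have h12 : (0:ℝ) ≤ A 0 0 + A 1 1 - A 0 1 - A 1 0 := by
    have := hsub 0 0 1
    linarith
  apply le_antisymm
  · have hmem : ((0:Fin (n+2)), (1:Fin (n+2))) ∈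
        (Finset.univ.filter (fun p : Fin (n+2) × Fin (n+2) => p.1 < p.2)) := by
      simp [Fin.zero_lt_one]
    have := Finset.le_sup' (f := fun p : Fin (n+2) × Fin (n+2) =>
      |A p.1 0 + A p.2 1 - A p.1 1 - A p.2 0|) hmem
    calc A 0 0 + A 1 1 - A 0 1 - A 1 0
        ≤ |A 0 0 + A 1 1 - A 0 1 - A 1 0| := le_abs_self _
      _ ≤ _ := this
  · apply Finset.sup'_le
    rintro ⟨k, l⟩ -
    rw [abs_le]
    constructor
    · have h1 := hsub k 0 1
      have h2 := hsub l 1 0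
      linarith
    · have h1 := hsub k 1 0
      have h2 := hsub l 0 1
      linarith
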